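/- Diffusion on any finite graph from any integer initial configuration is eventually periodic with period dividing 2: there exists T such that w_G(t+2) = w_G(t) for all t ≥ T. -/
import Mathlib


open Finset Classical

/-- One step of the diffusion process: each vertex gains one chip from each
neighbour with a strictly larger label and loses one chip to each neighbour
with a strictly smaller label. -/
noncomputable def diffStep {n : ℕ} (G : SimpleGraph (Fin n)) (w : Fin n → ℤ) : Fin n → ℤ :=
  fun v => w v + ((Finset.univ.filter fun u => G.Adj v u ∧ w v < w u).card : ℤ)
             - ((Finset.univ.filter fun u => G.Adj v u ∧ w u < w v).card : ℤ)

/-- The labelling at time `t` of the diffusion process started from `w0`. -/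
noncomputable def diff {n : ℕ} (G : SimpleGraph (Fin n)) (w0 : Fin n → ℤ) (t : ℕ) : Fin n → ℤ :=
  (diffStep G)^[t] w0

/-- The potential `P(t) = ∑_v w_v(t) · w_v(t+1)`. -/
noncomputable def pot {n : ℕ} (G : SimpleGraph (Fin n)) (w0 : Fin n → ℤ) (t : ℕ) : ℤ :=
  ∑ v, diff G w0 t v * diff G w0 (t + 1) v

/-- `x_{uv}(t) = sgn(w_u(t) - w_v(t))` for edges, `0` for non-edges. -/
noncomputable def xlab {n : ℕ} (G : SimpleGraph (Fin n)) (w0 : Fin n → ℤ)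
    (u v : Fin n) (t : ℕ) : ℤ :=
  if G.Adj u v then Int.sign (diff G w0 t u - diff G w0 t v) else 0

/-- `y_{uv}(t) = sgn(w_u(t+1) - w_v(t+1))` for edges, `0` for non-edges. -/
noncomputable def ylab {n : ℕ} (G : SimpleGraph (Fin n)) (w0 : Fin n → ℤ)
    (u v : Fin n) (t : ℕ) : ℤ :=
  if G.Adj u v then Int.sign (diff G w0 (t + 1) u - diff G w0 (t + 1) v) else 0

/-- The label `(x_{uv}(t), y_{uv}(t))` of the edge `uv` at time `t`. -/
noncomputable def elabel {n : ℕ} (G : SimpleGraph (Fin n)) (w0 : Fin n → ℤ)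
    (u v : Fin n) (t : ℕ) : ℤ × ℤ :=
  (xlab G w0 u v t, ylab G w0 u v t)

-- sign helpers
lemma sign_cases (a : ℤ) : (0 < a ∧ a.sign = 1) ∨ (a = 0 ∧ a.sign = 0) ∨ (a < 0 ∧ a.sign = -1) := by
  rcases lt_trichotomy a 0 with h|h|h
  · exact Or.inr (Or.inr ⟨h, Int.sign_eq_neg_one_of_neg h⟩)
  · exact Or.inr (Or.inl ⟨h, by simp [h]⟩)
  · exact Or.inl ⟨h, Int.sign_eq_one_of_pos h⟩

lemma h1 (a b : ℤ) : 0 ≤ a * (b.sign + a.sign) := by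
  rcases sign_cases a with ⟨h, hs⟩|⟨h, hs⟩|⟨h, hs⟩ <;>
    rcases sign_cases b with ⟨h', hs'⟩|⟨h', hs'⟩|⟨h', hs'⟩ <;>
    rw [hs, hs'] <;> nlinarith

lemma h2 (a b : ℤ) (h : a * (b.sign + a.sign) = 0) (ha : a ≠ 0) : b.sign = -a.sign := by
  rcases mul_eq_zero.mp h with h'|h'
  · exact absurd h' ha
  · linarith

lemma xlab_anti {n : ℕ} (G : SimpleGraph (Fin n)) (w0 : Fin n → ℤ) (u v : Fin n) (t : ℕ) :
    xlab G w0 v u t = - xlab G w0 u v t := by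
  unfold xlab
  by_cases h : G.Adj u v
  · simp only [h, h.symm, if_true]
    rw [← Int.sign_neg]; ring_nf
  · rw [if_neg h, if_neg (fun h' => h (SimpleGraph.Adj.symm h')), neg_zero]

lemma diff_succ {n : ℕ} (G : SimpleGraph (Fin n)) (w0 : Fin n → ℤ) (t : ℕ) (v : Fin n) :
    diff G w0 (t + 1) v = diff G w0 t v + ∑ u, xlab G w0 u v t := by
  have h : diff G w0 (t + 1) = diffStep G (diff G w0 t) := by
    simp [diff, Function.iterate_succ_apply']
  rw [h]
  show diff G w0 t v + _ - _ = _
  set w := diff G w0 t with hw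
  have key : ∑ u, xlab G w0 u v t
      = ∑ u : Fin n, (((if G.Adj v u ∧ w v < w u then (1:ℤ) else 0))
          - ((if G.Adj v u ∧ w u < w v then (1:ℤ) else 0))) := by
    apply Finset.sum_congr rfl
    intro u _
    unfold xlab
    rw [← hw]
    by_cases hadj : G.Adj u v
    · have hadj' : G.Adj v u := hadj.symm
      rcases lt_trichotomy (w u) (w v) with h'|h'|h'
      · rw [if_pos hadj, Int.sign_eq_neg_one_of_neg (by linarith),
          if_neg (by simp [not_lt.mpr (le_of_lt h')]), if_pos ⟨hadj', h'⟩]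
        ring
      · rw [if_pos hadj, h']
        simp [not_lt]
      · rw [if_pos hadj, Int.sign_eq_one_of_pos (by linarith),
          if_pos ⟨hadj', h'⟩, if_neg (by simp [not_lt.mpr (le_of_lt h')])]
        ring
    · have hadj' : ¬ G.Adj v u := fun h' => hadj h'.symm
      simp [hadj, hadj']
  rw [key, Finset.sum_sub_distrib, Finset.sum_boole, Finset.sum_boole]
  ring_nf

lemma two_mul_pot_diff {n : ℕ} (G : SimpleGraph (Fin n)) (w0 : Fin n → ℤ) (t : ℕ) :
    2 * (pot G w0 (t + 1) - pot G w0 t)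
      = ∑ v, ∑ u, (diff G w0 (t + 1) v - diff G w0 (t + 1) u)
          * (xlab G w0 u v t + xlab G w0 u v (t + 1)) := by
  set w := diff G w0 with hwdef
  set x := xlab G w0 with hxdef
  have hD : pot G w0 (t + 1) - pot G w0 t
      = ∑ v, ∑ u, w (t + 1) v * (x u v t + x u v (t + 1)) := by
    unfold pot
    rw [← Finset.sum_sub_distrib]
    apply Finset.sum_congr rfl
    intro v _
    have e2 : w (t + 1 + 1) v = w (t + 1) v + ∑ u, x u v (t + 1) := diff_succ G w0 (t + 1) v
    have e1 : w (t + 1) v = w t v + ∑ u, x u v t := diff_succ G w0 t v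
    calc w (t + 1) v * w (t + 1 + 1) v - w t v * w (t + 1) v
        = w (t + 1) v * (∑ u, x u v t + ∑ u, x u v (t + 1)) := by
          linear_combination w (t + 1) v * e2 + w (t + 1) v * e1
      _ = ∑ u, w (t + 1) v * (x u v t + x u v (t + 1)) := by
          rw [← Finset.sum_add_distrib, Finset.mul_sum]
  have hD' : pot G w0 (t + 1) - pot G w0 t
      = ∑ v, ∑ u, -(w (t + 1) u * (x u v t + x u v (t + 1))) := by
    have hanti : ∀ a b s, x b a s = - x a b s := fun a b s => xlab_anti G w0 a b s
    rw [hD, Finset.sum_comm]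
    apply Finset.sum_congr rfl; intro v _
    apply Finset.sum_congr rfl; intro u _
    rw [hanti u v t, hanti u v (t + 1)]
    ring
  calc 2 * (pot G w0 (t + 1) - pot G w0 t)
      = (pot G w0 (t + 1) - pot G w0 t) + (pot G w0 (t + 1) - pot G w0 t) := by ring
    _ = (∑ v, ∑ u, w (t + 1) v * (x u v t + x u v (t + 1)))
          + ∑ v, ∑ u, -(w (t + 1) u * (x u v t + x u v (t + 1))) := by
        rw [← hD, ← hD']
    _ = ∑ v, ∑ u, (w (t + 1) v * (x u v t + x u v (t + 1))
          + -(w (t + 1) u * (x u v t + x u v (t + 1)))) := by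
        rw [← Finset.sum_add_distrib]
        apply Finset.sum_congr rfl; intro v _
        rw [← Finset.sum_add_distrib]
    _ = _ := by
        apply Finset.sum_congr rfl; intro v _
        apply Finset.sum_congr rfl; intro u _
        ring

lemma xlab_succ_eq_sign {n : ℕ} (G : SimpleGraph (Fin n)) (w0 : Fin n → ℤ) (u v : Fin n)
    (t : ℕ) (h : G.Adj u v) :
    xlab G w0 u v t = (diff G w0 t u - diff G w0 t v).sign := by
  unfold xlab; rw [if_pos h]

lemma term_nonpos {n : ℕ} (G : SimpleGraph (Fin n)) (w0 : Fin n → ℤ) (u v : Fin n) (t : ℕ) :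
    (diff G w0 (t + 1) v - diff G w0 (t + 1) u)
        * (xlab G w0 u v t + xlab G w0 u v (t + 1)) ≤ 0 := by
  by_cases h : G.Adj u v
  · rw [xlab_succ_eq_sign G w0 u v t h, xlab_succ_eq_sign G w0 u v (t + 1) h]
    set a := diff G w0 (t + 1) u - diff G w0 (t + 1) v with ha
    set b := diff G w0 t u - diff G w0 t v with hb
    have : diff G w0 (t + 1) v - diff G w0 (t + 1) u = -a := by rw [ha]; ring
    rw [this]
    have := h1 a b
    nlinarith
  · unfold xlab
    rw [if_neg h, if_neg h]
    simp

lemma pot_antitone {n : ℕ} (G : SimpleGraph (Fin n)) (w0 : Fin n → ℤ) (t : ℕ) :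
    pot G w0 (t + 1) ≤ pot G w0 t := by
  have h := two_mul_pot_diff G w0 t
  have hnp : ∑ v, ∑ u, (diff G w0 (t + 1) v - diff G w0 (t + 1) u)
      * (xlab G w0 u v t + xlab G w0 u v (t + 1)) ≤ 0 := by
    apply Finset.sum_nonpos
    intro v _
    exact Finset.sum_nonpos fun u _ => term_nonpos G w0 u v t
  linarith

lemma abs_step_le {n : ℕ} (G : SimpleGraph (Fin n)) (w0 : Fin n → ℤ) (t : ℕ) (v : Fin n) :
    |diff G w0 (t + 1) v - diff G w0 t v| ≤ (n : ℤ) := by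
  rw [diff_succ G w0 t v]
  have : diff G w0 t v + ∑ u, xlab G w0 u v t - diff G w0 t v = ∑ u, xlab G w0 u v t := by ring
  rw [this]
  calc |∑ u, xlab G w0 u v t| ≤ ∑ u, |xlab G w0 u v t| := Finset.abs_sum_le_sum_abs _ _
    _ ≤ ∑ _u : Fin n, (1 : ℤ) := by
        apply Finset.sum_le_sum
        intro u _
        unfold xlab
        split
        · rename_i z
          rcases sign_cases (diff G w0 t u - diff G w0 t v) with ⟨_, hs⟩|⟨_, hs⟩|⟨_, hs⟩ <;>
            rw [hs] <;> simp
        · simp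
    _ = (n : ℤ) := by simp

lemma pot_lower {n : ℕ} (G : SimpleGraph (Fin n)) (w0 : Fin n → ℤ) (t : ℕ) :
    -(n : ℤ)^3 ≤ pot G w0 t := by
  unfold pot
  calc -(n : ℤ)^3 = ∑ _v : Fin n, (-(n : ℤ)^2) := by
        simp; ring
    _ ≤ ∑ v, diff G w0 t v * diff G w0 (t + 1) v := by
        apply Finset.sum_le_sum
        intro v _
        have h := abs_step_le G w0 t v
        rw [abs_le] at h
        obtain ⟨h1, h2⟩ := h
        set d := diff G w0 (t + 1) v - diff G w0 t v with hd
        have hw' : diff G w0 (t + 1) v = diff G w0 t v + d := by rw [hd]; ring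
        rw [hw']
        nlinarith [sq_nonneg (2 * diff G w0 t v + d),
          mul_nonneg (by linarith : (0:ℤ) ≤ (n : ℤ) - d) (by linarith : (0:ℤ) ≤ (n : ℤ) + d)]

lemma eventually_const (P : ℕ → ℤ) (C : ℤ) (hb : ∀ t, C ≤ P t) (hd : ∀ t, P (t + 1) ≤ P t) :
    ∃ T : ℕ, ∀ t, T ≤ t → P (t + 1) = P t := by
  have hanti : ∀ a b, a ≤ b → P b ≤ P a := fun a b h =>
    antitone_nat_of_succ_le hd h
  obtain ⟨lb, ⟨T, hT⟩, hleast⟩ := Int.exists_least_of_bdd (P := fun z => ∃ t, P t = z)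
    ⟨C, fun z ⟨t, ht⟩ => ht ▸ hb t⟩ ⟨P 0, 0, rfl⟩
  refine ⟨T, fun t ht => ?_⟩
  have h1 : P (t + 1) ≤ P T := hanti T (t + 1) (by omega)
  have h2 : P t ≤ P T := hanti T t ht
  have h3 : lb ≤ P (t + 1) := hleast _ ⟨t + 1, rfl⟩
  have h4 : lb ≤ P t := hleast _ ⟨t, rfl⟩
  omega

theorem stmt14 {n : ℕ} (G : SimpleGraph (Fin n)) (w0 : Fin n → ℤ) :
    ∃ T : ℕ, ∀ t : ℕ, T ≤ t → diff G w0 (t + 2) = diff G w0 t := by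
  -- the potential is eventually constant
  obtain ⟨T, hT⟩ := eventually_const (pot G w0) (-(n : ℤ)^3) (pot_lower G w0)
    (pot_antitone G w0)
  -- key consequence: after time T, each nonzero y-label forces x = -y
  have key : ∀ t, T ≤ t → ∀ u v : Fin n,
      xlab G w0 u v (t + 1) ≠ 0 → xlab G w0 u v t = - xlab G w0 u v (t + 1) := by
    intro t ht u v hy
    have hadj : G.Adj u v := by
      by_contra h
      apply hy
      unfold xlab
      rw [if_neg h]
    have hzero : ∀ v' ∈ (Finset.univ : Finset (Fin n)), ∀ u' ∈ (Finset.univ : Finset (Fin n)),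
        (diff G w0 (t + 1) v' - diff G w0 (t + 1) u')
          * (xlab G w0 u' v' t + xlab G w0 u' v' (t + 1)) = 0 := by
      have hsum : ∑ v', ∑ u', (diff G w0 (t + 1) v' - diff G w0 (t + 1) u')
          * (xlab G w0 u' v' t + xlab G w0 u' v' (t + 1)) = 0 := by
        rw [← two_mul_pot_diff G w0 t, hT t ht]
        ring
      have houter := (Finset.sum_eq_zero_iff_of_nonpos
        (fun v' _ => Finset.sum_nonpos fun u' _ => term_nonpos G w0 u' v' t)).mp hsum
      intro v' hv' u' hu'
      exact (Finset.sum_eq_zero_iff_of_nonpos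
        (fun u' _ => term_nonpos G w0 u' v' t)).mp (houter v' hv') u' hu'
    have hz := hzero v (Finset.mem_univ v) u (Finset.mem_univ u)
    rw [xlab_succ_eq_sign G w0 u v t hadj, xlab_succ_eq_sign G w0 u v (t + 1) hadj] at hz ⊢
    set a := diff G w0 (t + 1) u - diff G w0 (t + 1) v with ha
    set b := diff G w0 t u - diff G w0 t v with hb
    have ha0 : a ≠ 0 := by
      intro h
      apply hy
      rw [xlab_succ_eq_sign G w0 u v (t + 1) hadj, ← ha, h]
      rfl
    have hz' : a * (b.sign + a.sign) = 0 := by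
      have : diff G w0 (t + 1) v - diff G w0 (t + 1) u = -a := by rw [ha]; ring
      rw [this] at hz
      linarith [hz]
    exact h2 a b hz' ha0
  -- once a label hits zero after T, it stays zero
  have absorb : ∀ u v : Fin n, ∀ s, T ≤ s → xlab G w0 u v (s + 1) = 0 →
      ∀ t, s + 1 ≤ t → xlab G w0 u v t = 0 := by
    intro u v s hs h0 t ht
    induction t with
    | zero => omega
    | succ m ih =>
      rcases Nat.lt_or_ge (s + 1) (m + 1) with hlt | hge
      · have hm : s + 1 ≤ m := by omega
        have hm0 : xlab G w0 u v m = 0 := ih hm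
        by_contra hne
        have := key m (by omega) u v hne
        rw [hm0] at this
        omega
      · have : m + 1 = s + 1 := by omega
        rw [this]; exact h0
  -- per pair, eventually x(t) + x(t+1) = 0
  have hpair : ∀ p : Fin n × Fin n, ∃ tp : ℕ, T ≤ tp ∧ ∀ t, tp ≤ t →
      xlab G w0 p.1 p.2 t + xlab G w0 p.1 p.2 (t + 1) = 0 := by
    rintro ⟨u, v⟩
    dsimp only
    by_cases hex : ∃ s, T ≤ s ∧ xlab G w0 u v (s + 1) = 0
    · obtain ⟨s, hs, h0⟩ := hex
      refine ⟨s + 1, by omega, fun t ht => ?_⟩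
      rw [absorb u v s hs h0 t ht, absorb u v s hs h0 (t + 1) (by omega)]
      ring
    · push_neg at hex
      refine ⟨T, le_refl T, fun t ht => ?_⟩
      have := key t ht u v (hex t ht)
      omega
  choose f hf using hpair
  set Tstar : ℕ := Finset.univ.sup f with hTstar
  refine ⟨Tstar, fun t ht => ?_⟩
  funext v
  have hsum : ∀ u : Fin n, xlab G w0 u v t + xlab G w0 u v (t + 1) = 0 := by
    intro u
    exact (hf (u, v)).2 t (le_trans (Finset.le_sup (Finset.mem_univ (u, v))) ht)
  have e2 : diff G w0 (t + 2) v = diff G w0 (t + 1) v + ∑ u, xlab G w0 u v (t + 1) :=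
    diff_succ G w0 (t + 1) v
  have e1 : diff G w0 (t + 1) v = diff G w0 t v + ∑ u, xlab G w0 u v t :=
    diff_succ G w0 t v
  have hzero : ∑ u, xlab G w0 u v t + ∑ u, xlab G w0 u v (t + 1) = 0 := by
    rw [← Finset.sum_add_distrib]
    exact Finset.sum_eq_zero fun u _ => hsum u
  rw [e2, e1]
  linarith [hzero]
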